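/- In S = 𝔽_2[X,Y], there do not exist polynomials g(X,Y) ∈ S and h ∈ 𝔽_2[T] such that X = h(XY) + (X+Y)·g(X,Y). -/
import Mathlib


open MvPolynomial

/-- In `S = 𝔽₂[X,Y]` there are no polynomials `g(X,Y) ∈ S` and
`h ∈ 𝔽₂[T]` with `X = h(XY) + (X+Y)·g(X,Y)`. -/
theorem stmt8 :
    ¬ ∃ (g : MvPolynomial (Fin 2) (ZMod 2)) (h : Polynomial (ZMod 2)),
      (X 0 : MvPolynomial (Fin 2) (ZMod 2)) =
        Polynomial.aeval (X 0 * X 1 : MvPolynomial (Fin 2) (ZMod 2)) h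
          + (X 0 + X 1) * g := by
  rintro ⟨g, h, heq⟩
  have h2 := congrArg (MvPolynomial.aeval (fun _ : Fin 2 => (Polynomial.X : Polynomial (ZMod 2)))) heq
  rw [map_add, map_mul, map_add, ← Polynomial.aeval_algHom_apply] at h2
  simp only [map_mul, MvPolynomial.aeval_X, CharTwo.add_self_eq_zero, zero_mul, add_zero] at h2
  have h3 : (Polynomial.X : Polynomial (ZMod 2)) =
      Polynomial.expand (ZMod 2) 2 h := by
    rw [h2]
    simp [Polynomial.expand, Polynomial.aeval_def, sq]
  have := congrArg (fun p => Polynomial.coeff p 1) h3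
  simp [Polynomial.coeff_expand] at this
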